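/- If K is a mixing kernel with constant ε (i.e., there exists a non-negative measure λ with ε·λ(A) ≤ K(x,A) ≤ (1/ε)·λ(A) for all x and measurable A, where 0 < ε ≤ 1), then for any two probability measures μ, ν, the pushed-forward measures Kμ and Kν (defined by (Kμ)(A) = ∫ K(x,A) dμ(x)) satisfy h(Kμ, Kν) ≤ (1/ε²)·‖μ − ν‖_TV, where h is the Hilbert projective metric. -/

import Mathlib

open MeasureTheory ProbabilityTheory

open scoped ENNReal

lemma lintegral_le_lintegral_add {X : Type*} [MeasurableSpace X] (μ ν : Measure X)
    [IsProbabilityMeasure μ] [IsProbabilityMeasure ν]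
    (f : X → ℝ≥0∞) (hf : Measurable f) (c M t : ℝ≥0∞)
    (hc : ∀ x, c ≤ f x) (hM : ∀ x, f x ≤ c + M)
    (ht : ∀ B, MeasurableSet B → μ B ≤ ν B + t) :
    ∫⁻ x, f x ∂μ ≤ (∫⁻ x, f x ∂ν) + M * t := by
  set g : X → ℝ≥0∞ := fun x => f x - c with hgdef
  have hgm : Measurable g := hf.sub measurable_const
  have hfg : ∀ x, f x = g x + c := fun x => (tsub_add_cancel_of_le (hc x)).symm
  have hgM : ∀ x, g x ≤ M := fun x => tsub_le_iff_left.mpr (hM x)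
  obtain ⟨S, hS, hS1, hS2⟩ := hahn_decomposition (μ := μ) (ν := ν)
  have hrest : ν.restrict S ≤ μ.restrict S := by
    refine Measure.le_iff.mpr fun u hu => ?_
    rw [Measure.restrict_apply hu, Measure.restrict_apply hu]
    exact hS1 _ (hu.inter hS) Set.inter_subset_right
  have hrestc : μ.restrict Sᶜ ≤ ν.restrict Sᶜ := by
    refine Measure.le_iff.mpr fun u hu => ?_
    rw [Measure.restrict_apply hu, Measure.restrict_apply hu]
    exact hS2 _ (hu.inter hS.compl) Set.inter_subset_right
  have hmu : ∫⁻ x, f x ∂μ = (∫⁻ x, g x ∂μ) + c := by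
    rw [lintegral_congr hfg, lintegral_add_right _ measurable_const, lintegral_const,
      measure_univ, mul_one]
  have hnu : ∫⁻ x, f x ∂ν = (∫⁻ x, g x ∂ν) + c := by
    rw [lintegral_congr hfg, lintegral_add_right _ measurable_const, lintegral_const,
      measure_univ, mul_one]
  have key : ∫⁻ x, g x ∂μ ≤ (∫⁻ x, g x ∂ν) + M * t := by
    rw [← lintegral_add_compl g hS (μ := μ), ← lintegral_add_compl g hS (μ := ν)]
    have h2 : ∫⁻ x in Sᶜ, g x ∂μ ≤ ∫⁻ x in Sᶜ, g x ∂ν := lintegral_mono' hrestc le_rfl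
    have h1 : ∫⁻ x in S, g x ∂μ ≤ (∫⁻ x in S, g x ∂ν) + M * t := by
      have hρ := Measure.sub_add_cancel_of_le hrest
      have hsplit : ∫⁻ x in S, g x ∂μ
          = (∫⁻ x, g x ∂(μ.restrict S - ν.restrict S)) + ∫⁻ x in S, g x ∂ν := by
        conv_lhs => rw [← hρ]
        rw [lintegral_add_measure]
      rw [hsplit, add_comm (∫⁻ x in S, g x ∂ν) (M * t)]
      refine add_le_add_left ?_ _
      calc ∫⁻ x, g x ∂(μ.restrict S - ν.restrict S)
          ≤ ∫⁻ _, M ∂(μ.restrict S - ν.restrict S) := lintegral_mono hgM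
        _ = M * (μ.restrict S - ν.restrict S) Set.univ := lintegral_const _
        _ ≤ M * t := by
            refine mul_le_mul_right ?_ M
            rw [Measure.sub_apply MeasurableSet.univ hrest, Measure.restrict_apply_univ,
              Measure.restrict_apply_univ]
            exact tsub_le_iff_right.mpr (by rw [add_comm]; exact ht S hS)
    calc (∫⁻ x in S, g x ∂μ) + ∫⁻ x in Sᶜ, g x ∂μ
        ≤ ((∫⁻ x in S, g x ∂ν) + M * t) + ∫⁻ x in Sᶜ, g x ∂ν := add_le_add h1 h2
      _ = ((∫⁻ x in S, g x ∂ν) + ∫⁻ x in Sᶜ, g x ∂ν) + M * t := by ring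
  rw [hmu, hnu]
  calc (∫⁻ x, g x ∂μ) + c ≤ ((∫⁻ x, g x ∂ν) + M * t) + c := add_le_add_left key c
    _ = ((∫⁻ x, g x ∂ν) + c) + M * t := by ring

lemma bind_le_bind_add {X : Type*} [MeasurableSpace X] (K : Kernel X X) (ε : ℝ)
    (hε : 0 < ε) (hε1 : ε ≤ 1) (lam : Measure X)
    (hlam : ∀ x : X, ∀ A : Set X, MeasurableSet A →
      ENNReal.ofReal ε * lam A ≤ K x A ∧ K x A ≤ (ENNReal.ofReal ε)⁻¹ * lam A)
    (μ ν : Measure X) [IsProbabilityMeasure μ] [IsProbabilityMeasure ν]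
    (t : ℝ≥0∞) (ht : ∀ B, MeasurableSet B → μ B ≤ ν B + t)
    (A : Set X) (hA : MeasurableSet A) :
    (μ.bind fun x => K x) A ≤ (ν.bind fun x => K x) A
      + ((ENNReal.ofReal ε)⁻¹ - ENNReal.ofReal ε) * lam A * t := by
  set e := ENNReal.ofReal ε with he
  have he1 : e ≤ 1 := by
    rw [he]; exact ENNReal.ofReal_le_one.mpr hε1
  have hee : e ≤ e⁻¹ := le_trans he1 (ENNReal.one_le_inv.mpr he1)
  rw [Measure.bind_apply hA K.measurable.aemeasurable, Measure.bind_apply hA K.measurable.aemeasurable]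
  refine lintegral_le_lintegral_add μ ν _ (K.measurable_coe hA) (e * lam A)
    ((e⁻¹ - e) * lam A) t (fun x => (hlam x A hA).1) (fun x => ?_) ht
  refine le_trans (hlam x A hA).2 ?_
  rw [← add_mul, add_tsub_cancel_of_le hee]

/-- Total variation distance `‖μ−ν‖_TV = 2 sup_A |μ(A) − ν(A)|`. -/
noncomputable def tvDist {X : Type*} [MeasurableSpace X] (μ ν : Measure X) : ℝ :=
  2 * ⨆ A : {A : Set X // MeasurableSet A}, |(μ A.1).toReal - (ν A.1).toReal|

/-- Hilbert projective metric. -/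
noncomputable def hilbertMetric {X : Type*} [MeasurableSpace X] (μ ν : Measure X) : ℝ :=
  Real.log
    ((⨆ A : {A : Set X // MeasurableSet A ∧ ν A ≠ 0}, (μ A.1).toReal / (ν A.1).toReal) /
      (⨅ A : {A : Set X // MeasurableSet A ∧ ν A ≠ 0}, (μ A.1).toReal / (ν A.1).toReal))

/-- A kernel `K` is mixing with constant `ε ∈ (0,1]`: there is a non-negative
measure `λ` with `ε·λ(A) ≤ K(x,A) ≤ ε⁻¹·λ(A)` for every `x` and measurable `A`. -/
def MixingKernel {X : Type*} [MeasurableSpace X] (K : Kernel X X) (ε : ℝ) : Prop :=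
  0 < ε ∧ ε ≤ 1 ∧ ∃ lam : Measure X, ∀ x : X, ∀ A : Set X, MeasurableSet A →
    ENNReal.ofReal ε * lam A ≤ K x A ∧ K x A ≤ (ENNReal.ofReal ε)⁻¹ * lam A

/-- If `K` is mixing with constant `ε`, then for any two probability measures `μ, ν`,
`h(Kμ, Kν) ≤ ε⁻²·‖μ − ν‖_TV`, where `(Kμ)(A) = ∫ K(x,A) dμ(x)`. -/
theorem hilbert_bind_le_tv {X : Type*} [MeasurableSpace X] (K : Kernel X X) (ε : ℝ)
    (hK : MixingKernel K ε) (μ ν : Measure X)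
    [IsProbabilityMeasure μ] [IsProbabilityMeasure ν] :
    hilbertMetric (μ.bind (fun x => K x)) (ν.bind (fun x => K x)) ≤ (1 / ε ^ 2) * tvDist μ ν := by
  obtain ⟨hε, hε1, lam, hlam⟩ := hK
  set e := ENNReal.ofReal ε with he
  have hepos : 0 < e := ENNReal.ofReal_pos.mpr hε
  have heinv_top : e⁻¹ ≠ ∞ := ENNReal.inv_ne_top.mpr hepos.ne'
  -- total variation
  set T : ℝ := ⨆ A : {A : Set X // MeasurableSet A}, |(μ A.1).toReal - (ν A.1).toReal| with hTdef
  have hbdd : BddAbove (Set.range fun A : {A : Set X // MeasurableSet A} =>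
      |(μ A.1).toReal - (ν A.1).toReal|) := by
    refine ⟨2, ?_⟩
    rintro x ⟨A, rfl⟩
    have h1 : (μ A.1).toReal ≤ 1 := by
      simpa using ENNReal.toReal_mono ENNReal.one_ne_top (prob_le_one (μ := μ) (s := A.1))
    have h2 : (ν A.1).toReal ≤ 1 := by
      simpa using ENNReal.toReal_mono ENNReal.one_ne_top (prob_le_one (μ := ν) (s := A.1))
    have h3 : 0 ≤ (μ A.1).toReal := ENNReal.toReal_nonneg
    have h4 : 0 ≤ (ν A.1).toReal := ENNReal.toReal_nonneg
    rw [abs_sub_le_iff]; constructor <;> linarith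
  have hTmem : ∀ (A : Set X), MeasurableSet A → |(μ A).toReal - (ν A).toReal| ≤ T :=
    fun A hA => le_ciSup hbdd ⟨A, hA⟩
  have hT0 : 0 ≤ T := le_trans (abs_nonneg _) (hTmem ∅ MeasurableSet.empty)
  have htv : tvDist μ ν = 2 * T := rfl
  have hRHS : 0 ≤ (1 / ε ^ 2) * tvDist μ ν := by
    rw [htv]; positivity
  have ht : ∀ B, MeasurableSet B → μ B ≤ ν B + ENNReal.ofReal T := by
    intro B hB
    have h1 : (μ B).toReal ≤ (ν B).toReal + T := by
      have := (abs_le.mp (hTmem B hB)).2; linarith [abs_le.mp (hTmem B hB)]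
    calc μ B = ENNReal.ofReal (μ B).toReal := (ENNReal.ofReal_toReal (measure_ne_top μ B)).symm
      _ ≤ ENNReal.ofReal ((ν B).toReal + T) := ENNReal.ofReal_le_ofReal h1
      _ = ENNReal.ofReal (ν B).toReal + ENNReal.ofReal T :=
          ENNReal.ofReal_add ENNReal.toReal_nonneg hT0
      _ = ν B + ENNReal.ofReal T := by rw [ENNReal.ofReal_toReal (measure_ne_top ν B)]
  have ht' : ∀ B, MeasurableSet B → ν B ≤ μ B + ENNReal.ofReal T := by
    intro B hB
    have h1 : (ν B).toReal ≤ (μ B).toReal + T := by linarith [abs_le.mp (hTmem B hB)]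
    calc ν B = ENNReal.ofReal (ν B).toReal := (ENNReal.ofReal_toReal (measure_ne_top ν B)).symm
      _ ≤ ENNReal.ofReal ((μ B).toReal + T) := ENNReal.ofReal_le_ofReal h1
      _ = ENNReal.ofReal (μ B).toReal + ENNReal.ofReal T :=
          ENNReal.ofReal_add ENNReal.toReal_nonneg hT0
      _ = μ B + ENNReal.ofReal T := by rw [ENNReal.ofReal_toReal (measure_ne_top μ B)]
  set μ' := μ.bind fun x => K x with hμ'
  set ν' := ν.bind fun x => K x with hν'
  have hup : ∀ (ρ : Measure X), IsProbabilityMeasure ρ → ∀ A, MeasurableSet A →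
      (ρ.bind fun x => K x) A ≤ e⁻¹ * lam A := by
    intro ρ hρ A hA
    rw [Measure.bind_apply hA K.measurable.aemeasurable]
    calc ∫⁻ x, K x A ∂ρ ≤ ∫⁻ _, e⁻¹ * lam A ∂ρ := lintegral_mono fun x => (hlam x A hA).2
      _ = e⁻¹ * lam A := by rw [lintegral_const, measure_univ, mul_one]
  have hlo : ∀ (ρ : Measure X), IsProbabilityMeasure ρ → ∀ A, MeasurableSet A →
      e * lam A ≤ (ρ.bind fun x => K x) A := by
    intro ρ hρ A hA
    rw [Measure.bind_apply hA K.measurable.aemeasurable]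
    calc e * lam A = ∫⁻ _, e * lam A ∂ρ := by rw [lintegral_const, measure_univ, mul_one]
      _ ≤ ∫⁻ x, K x A ∂ρ := lintegral_mono fun x => (hlam x A hA).1
  by_cases hzero : lam Set.univ = 0
  · have hempty : IsEmpty {A : Set X // MeasurableSet A ∧ ν' A ≠ 0} := by
      constructor
      rintro ⟨A, hA, hne⟩
      apply hne
      have hlam0 : lam A = 0 :=
        le_antisymm (le_trans (measure_mono (Set.subset_univ A)) hzero.le) zero_le
      have := hup ν inferInstance A hA
      rw [hlam0, mul_zero] at this
      exact le_antisymm this zero_le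
    show Real.log _ ≤ _
    rw [Real.iSup_of_isEmpty, Real.iInf_of_isEmpty, zero_div, Real.log_zero]
    exact hRHS
  by_cases htop : lam Set.univ = ∞
  · have hνtop : ν' Set.univ = ∞ := by
      refine top_le_iff.mp ?_
      have := hlo ν inferInstance Set.univ MeasurableSet.univ
      rw [htop, ENNReal.mul_top hepos.ne'] at this
      exact this
    have hμtop : μ' Set.univ = ∞ := by
      refine top_le_iff.mp ?_
      have := hlo μ inferInstance Set.univ MeasurableSet.univ
      rw [htop, ENNReal.mul_top hepos.ne'] at this
      exact this
    have hne : ν' Set.univ ≠ 0 := by rw [hνtop]; exact ENNReal.top_ne_zero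
    set val : {A : Set X // MeasurableSet A ∧ ν' A ≠ 0} → ℝ :=
      fun A => (μ' A.1).toReal / (ν' A.1).toReal with hval
    have hbddb : BddBelow (Set.range val) := by
      refine ⟨0, ?_⟩; rintro x ⟨A, rfl⟩; positivity
    haveI : Nonempty {A : Set X // MeasurableSet A ∧ ν' A ≠ 0} :=
      ⟨⟨Set.univ, MeasurableSet.univ, hne⟩⟩
    have hv0 : val ⟨Set.univ, MeasurableSet.univ, hne⟩ = 0 := by
      simp [hval, hμtop]
    have hinf0 : (⨅ A, val A) = 0 :=
      le_antisymm (le_trans (ciInf_le hbddb _) hv0.le) (le_ciInf fun A => by positivity)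
    show Real.log ((⨆ A, val A) / (⨅ A, val A)) ≤ _
    rw [hinf0, _root_.div_zero, Real.log_zero]
    exact hRHS
  · -- main case
    have hfinA : ∀ A : Set X, lam A ≠ ∞ :=
      fun A => ne_top_of_le_ne_top htop (measure_mono (Set.subset_univ A))
    set d : ℝ := (ε⁻¹ - ε) * T with hd
    have hinv1 : 1 ≤ ε⁻¹ := by
      have h := (one_le_div hε).mpr hε1
      simpa [one_div] using h
    have hd0 : 0 ≤ d := mul_nonneg (by linarith) hT0
    have hofd : ((e⁻¹ - e) : ℝ≥0∞) * ENNReal.ofReal T = ENNReal.ofReal d := by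
      rw [he, ← ENNReal.ofReal_inv_of_pos hε, ← ENNReal.ofReal_sub _ hε.le,
        ← ENNReal.ofReal_mul (by linarith)]
    have hkey : ∀ A, MeasurableSet A → μ' A ≤ ν' A + ENNReal.ofReal d * lam A := by
      intro A hA
      have := bind_le_bind_add K ε hε hε1 lam hlam μ ν (ENNReal.ofReal T) ht A hA
      rw [← he] at this
      calc μ' A ≤ ν' A + (e⁻¹ - e) * lam A * ENNReal.ofReal T := this
        _ = ν' A + ENNReal.ofReal d * lam A := by rw [mul_right_comm, hofd]
    have hkey' : ∀ A, MeasurableSet A → ν' A ≤ μ' A + ENNReal.ofReal d * lam A := by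
      intro A hA
      have := bind_le_bind_add K ε hε hε1 lam hlam ν μ (ENNReal.ofReal T) ht' A hA
      rw [← he] at this
      calc ν' A ≤ μ' A + (e⁻¹ - e) * lam A * ENNReal.ofReal T := this
        _ = μ' A + ENNReal.ofReal d * lam A := by rw [mul_right_comm, hofd]
    set q : ℝ := d / ε with hq
    have hq0 : 0 ≤ q := div_nonneg hd0 hε.le
    have hqd : d = q * ε := by rw [hq]; field_simp
    set R : ℝ := 1 + q with hR
    have hR1 : (1:ℝ) ≤ R := by rw [hR]; linarith
    have hR0 : (0:ℝ) < R := by linarith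
    set val : {A : Set X // MeasurableSet A ∧ ν' A ≠ 0} → ℝ :=
      fun A => (μ' A.1).toReal / (ν' A.1).toReal with hval
    have main : ∀ A : {A : Set X // MeasurableSet A ∧ ν' A ≠ 0},
        val A ≤ R ∧ R⁻¹ ≤ val A := by
      rintro ⟨A, hA, hne⟩
      have hlamA0 : lam A ≠ 0 := by
        intro h0
        apply hne
        have := hup ν inferInstance A hA
        rw [h0, mul_zero] at this
        exact le_antisymm this zero_le
      set l : ℝ := (lam A).toReal with hl
      have hl0 : 0 < l := ENNReal.toReal_pos hlamA0 (hfinA A)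
      have hνfin : ν' A ≠ ∞ :=
        ne_top_of_le_ne_top (ENNReal.mul_ne_top heinv_top (hfinA A)) (hup ν inferInstance A hA)
      have hμfin : μ' A ≠ ∞ :=
        ne_top_of_le_ne_top (ENNReal.mul_ne_top heinv_top (hfinA A)) (hup μ inferInstance A hA)
      set a : ℝ := (μ' A).toReal with ha
      set b : ℝ := (ν' A).toReal with hb
      have helam : (e * lam A).toReal = ε * l := by
        rw [ENNReal.toReal_mul, he, ENNReal.toReal_ofReal hε.le]
      have hbl : ε * l ≤ b := by
        rw [hb, ← helam]
        exact ENNReal.toReal_mono hνfin (hlo ν inferInstance A hA)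
      have hal : ε * l ≤ a := by
        rw [ha, ← helam]
        exact ENNReal.toReal_mono hμfin (hlo μ inferInstance A hA)
      have hb0 : 0 < b := lt_of_lt_of_le (by positivity) hbl
      have ha0 : 0 < a := lt_of_lt_of_le (by positivity) hal
      have hdlam : (ENNReal.ofReal d * lam A).toReal = d * l := by
        rw [ENNReal.toReal_mul, ENNReal.toReal_ofReal hd0]
      have hab : a ≤ b + d * l := by
        rw [ha, hb, ← hdlam]
        calc (μ' A).toReal ≤ (ν' A + ENNReal.ofReal d * lam A).toReal :=
              ENNReal.toReal_mono (by
                refine ENNReal.add_ne_top.mpr ⟨hνfin, ?_⟩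
                exact ENNReal.mul_ne_top ENNReal.ofReal_ne_top (hfinA A)) (hkey A hA)
          _ = (ν' A).toReal + (ENNReal.ofReal d * lam A).toReal :=
              ENNReal.toReal_add hνfin (ENNReal.mul_ne_top ENNReal.ofReal_ne_top (hfinA A))
      have hba : b ≤ a + d * l := by
        rw [ha, hb, ← hdlam]
        calc (ν' A).toReal ≤ (μ' A + ENNReal.ofReal d * lam A).toReal :=
              ENNReal.toReal_mono (by
                refine ENNReal.add_ne_top.mpr ⟨hμfin, ?_⟩
                exact ENNReal.mul_ne_top ENNReal.ofReal_ne_top (hfinA A)) (hkey' A hA)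
          _ = (μ' A).toReal + (ENNReal.ofReal d * lam A).toReal :=
              ENNReal.toReal_add hμfin (ENNReal.mul_ne_top ENNReal.ofReal_ne_top (hfinA A))
      constructor
      · show a / b ≤ R
        rw [div_le_iff₀ hb0, hR]
        rw [hqd] at hab
        nlinarith [mul_le_mul_of_nonneg_left hbl hq0]
      · show R⁻¹ ≤ a / b
        rw [le_div_iff₀ hb0]
        have h1 : b ≤ R * a := by
          rw [hR]
          rw [hqd] at hba
          nlinarith [mul_le_mul_of_nonneg_left hal hq0]
        calc R⁻¹ * b ≤ R⁻¹ * (R * a) := mul_le_mul_of_nonneg_left h1 (by positivity)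
          _ = a := by field_simp
    have hne_univ : ν' Set.univ ≠ 0 := by
      have h := hlo ν inferInstance Set.univ MeasurableSet.univ
      intro h0
      rw [h0] at h
      have : e * lam Set.univ ≠ 0 := mul_ne_zero hepos.ne' hzero
      exact this (le_antisymm h zero_le)
    have : Nonempty {A : Set X // MeasurableSet A ∧ ν' A ≠ 0} :=
      ⟨⟨Set.univ, MeasurableSet.univ, hne_univ⟩⟩
    have hsup : (⨆ A, val A) ≤ R := ciSup_le fun A => (main A).1
    have hinf : R⁻¹ ≤ ⨅ A, val A := le_ciInf fun A => (main A).2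
    have hinfpos : 0 < ⨅ A, val A := lt_of_lt_of_le (by positivity) hinf
    have hdiv : (⨆ A, val A) / (⨅ A, val A) ≤ R / R⁻¹ :=
      div_le_div₀ hR0.le hsup (by positivity) hinf
    obtain ⟨A₀⟩ := this
    have hsup0 : 0 < (⨆ A, val A) := by
      refine lt_of_lt_of_le (by positivity : (0:ℝ) < R⁻¹) ?_
      exact le_trans (main A₀).2 (le_ciSup ⟨R, by rintro x ⟨A, rfl⟩; exact (main A).1⟩ A₀)
    show Real.log ((⨆ A, val A) / (⨅ A, val A)) ≤ _
    calc Real.log ((⨆ A, val A) / (⨅ A, val A)) ≤ Real.log (R / R⁻¹) :=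
          Real.log_le_log (by positivity) hdiv
      _ = Real.log (R * R) := by rw [div_eq_mul_inv, inv_inv]
      _ = Real.log R + Real.log R := Real.log_mul hR0.ne' hR0.ne'
      _ ≤ (R - 1) + (R - 1) := add_le_add (Real.log_le_sub_one_of_pos hR0)
          (Real.log_le_sub_one_of_pos hR0)
      _ = 2 * q := by rw [hR]; ring
      _ ≤ (1 / ε ^ 2) * tvDist μ ν := by
          rw [htv, hq, hd]
          have e1 : (ε⁻¹ - ε) * T / ε = T / ε ^ 2 - T := by
            field_simp
          have e2 : 1 / ε ^ 2 * (2 * T) = 2 * (T / ε ^ 2) := by ring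
          rw [e1, e2]
          linarith
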